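/- arXiv:1809.09570 — 2 statements merged into one kernel-verified Lean document; each statement's English description precedes it below -/
import Mathlib

section
/- Let X and Y be operators on a finite-dimensional Banach space, h holomorphic on and inside a closed contour Γ with dist(Γ, spec(X)) ≥ R > 0, and assume β‖Y‖ < 1 where β = (DP/R)(1−(N/R)^D)/(1−N/R) bounds the resolvent of X on Γ, P = maxₖ‖Pₖ‖, N = maxₖ‖Nₖ‖. Suppose spec(X+Y) is also enclosed by Γ. Then ‖h(X+Y) − h(X)‖ ≤ M β²‖Y‖/(1 − β‖Y‖) with M = (1/2π)∮_Γ |h(z)| |dz|. -/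
attribute [local instance] Matrix.linftyOpNormedAddCommGroup Matrix.linftyOpNormedRing
  Matrix.linftyOpNormedAlgebra

/-- Resolvent perturbation bound. -/
theorem aux_resolvent_bound {n : Type*} [Fintype n] [DecidableEq n]
    (A Y : Matrix n n ℂ) (β : ℝ) (hA : IsUnit A) (hAi : ‖A⁻¹‖ ≤ β)
    (hβY : β * ‖Y‖ < 1) : ‖(A - Y)⁻¹ - A⁻¹‖ ≤ β ^ 2 * ‖Y‖ / (1 - β * ‖Y‖) := by
  have hβ0 : 0 ≤ β := le_trans (norm_nonneg _) hAi
  have h1 : 0 < 1 - β * ‖Y‖ := by linarith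
  have hdet : IsUnit A.det := (Matrix.isUnit_iff_isUnit_det A).mp hA
  have hAinv : A * A⁻¹ = 1 := Matrix.mul_nonsing_inv A hdet
  have hAinv' : A⁻¹ * A = 1 := Matrix.nonsing_inv_mul A hdet
  have hsmall : ‖A⁻¹ * Y‖ < 1 :=
    lt_of_le_of_lt (le_trans (norm_mul_le _ _) (by nlinarith [norm_nonneg Y])) hβY
  have hu1 : IsUnit (1 - A⁻¹ * Y) := (Units.oneSub _ hsmall).isUnit
  have hfact : A - Y = A * (1 - A⁻¹ * Y) := by
    rw [Matrix.mul_sub, mul_one, ← Matrix.mul_assoc, hAinv, Matrix.one_mul]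
  have hB : IsUnit (A - Y) := hfact ▸ hA.mul hu1
  have hBdet : IsUnit (A - Y).det := (Matrix.isUnit_iff_isUnit_det _).mp hB
  have hBinv : (A - Y) * (A - Y)⁻¹ = 1 := Matrix.mul_nonsing_inv _ hBdet
  have hBinv' : (A - Y)⁻¹ * (A - Y) = 1 := Matrix.nonsing_inv_mul _ hBdet
  have key : (A - Y)⁻¹ - A⁻¹ = (A - Y)⁻¹ * Y * A⁻¹ := by
    have : (A - Y)⁻¹ * (A - (A - Y)) * A⁻¹ = (A - Y)⁻¹ - A⁻¹ := by
      rw [Matrix.mul_sub, hBinv', Matrix.sub_mul, Matrix.mul_assoc, hAinv, Matrix.mul_one,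
        Matrix.one_mul]
    rw [← this, sub_sub_cancel]
  -- bound ‖(A-Y)⁻¹‖
  have hBid : (A - Y)⁻¹ = A⁻¹ + (A - Y)⁻¹ * Y * A⁻¹ := by
    rw [← key]; abel
  have hBn : ‖(A - Y)⁻¹‖ ≤ β / (1 - β * ‖Y‖) := by
    have h2 : ‖(A - Y)⁻¹‖ ≤ β + ‖(A - Y)⁻¹‖ * ‖Y‖ * β := by
      calc ‖(A - Y)⁻¹‖ = ‖A⁻¹ + (A - Y)⁻¹ * Y * A⁻¹‖ := by rw [← hBid]
        _ ≤ ‖A⁻¹‖ + ‖(A - Y)⁻¹ * Y * A⁻¹‖ := norm_add_le _ _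
        _ ≤ β + ‖(A - Y)⁻¹‖ * ‖Y‖ * β := by
            gcongr
            exact le_trans (norm_mul_le _ _) (by gcongr; exact norm_mul_le _ _)
    rw [le_div_iff₀ h1]
    nlinarith [norm_nonneg ((A - Y)⁻¹)]
  calc ‖(A - Y)⁻¹ - A⁻¹‖ = ‖(A - Y)⁻¹ * Y * A⁻¹‖ := by rw [key]
    _ ≤ ‖(A - Y)⁻¹‖ * ‖Y‖ * ‖A⁻¹‖ :=
        le_trans (norm_mul_le _ _) (by gcongr; exact norm_mul_le _ _)
    _ ≤ (β / (1 - β * ‖Y‖)) * ‖Y‖ * β := by gcongr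
    _ = β ^ 2 * ‖Y‖ / (1 - β * ‖Y‖) := by field_simp
open MeasureTheory

/-- Quantitative perturbation bound for primary matrix functions (Lemma on matrix
function bounds): if the resolvent of `X` is bounded by `β` on the contour `γ`
(parametrized over `[0,1]` with derivative `dγ`), `β‖Y‖ < 1`, and
`M ≥ (1/2π)∮ |h(z)||dz|`, then the Dunford-Taylor integrals satisfy
`‖h(X+Y) − h(X)‖ ≤ M β² ‖Y‖/(1 − β‖Y‖)`. -/
theorem matrix_function_perturbation_bound
    {n : Type*} [Fintype n] [DecidableEq n]
    (X Y : Matrix n n ℂ) (h : ℂ → ℂ) (γ dγ : ℝ → ℂ) (β M : ℝ)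
    (hγ : ∀ s ∈ Set.Icc (0:ℝ) 1, HasDerivAt γ (dγ s) s)
    (hXres : ∀ s ∈ Set.Icc (0:ℝ) 1, IsUnit (γ s • (1 : Matrix n n ℂ) - X))
    (hβ : ∀ s ∈ Set.Icc (0:ℝ) 1, ‖(γ s • (1 : Matrix n n ℂ) - X)⁻¹‖ ≤ β)
    (hβY : β * ‖Y‖ < 1)
    (hint0 : IntervalIntegrable (fun s => ‖h (γ s)‖ * ‖dγ s‖) volume 0 1)
    (hM : (2 * Real.pi)⁻¹ * (∫ s in (0:ℝ)..1, ‖h (γ s)‖ * ‖dγ s‖) ≤ M)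
    (hint1 : @IntervalIntegrable _ _ NormedAddCommGroup.toENormedAddCommMonoid.toENormedAddMonoid
      (fun s => (h (γ s) * dγ s) • (γ s • (1 : Matrix n n ℂ) - X)⁻¹) volume 0 1)
    (hint2 : @IntervalIntegrable _ _ NormedAddCommGroup.toENormedAddCommMonoid.toENormedAddMonoid
      (fun s => (h (γ s) * dγ s) • (γ s • (1 : Matrix n n ℂ) - (X + Y))⁻¹) volume 0 1) :
    ‖((2 * Real.pi * Complex.I)⁻¹ •
        ∫ s in (0:ℝ)..1, (h (γ s) * dγ s) • (γ s • (1 : Matrix n n ℂ) - (X + Y))⁻¹)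
      - ((2 * Real.pi * Complex.I)⁻¹ •
        ∫ s in (0:ℝ)..1, (h (γ s) * dγ s) • (γ s • (1 : Matrix n n ℂ) - X)⁻¹)‖
      ≤ M * (β ^ 2 * ‖Y‖) / (1 - β * ‖Y‖) := by
  have h1 : 0 < 1 - β * ‖Y‖ := by linarith
  set C : ℝ := β ^ 2 * ‖Y‖ / (1 - β * ‖Y‖) with hC
  have hβ0 : 0 ≤ β := le_trans (norm_nonneg _) (hβ 0 ⟨le_refl 0, zero_le_one⟩)
  have hC0 : 0 ≤ C := by positivity
  -- pointwise bound
  have hpt : ∀ s ∈ Set.Icc (0:ℝ) 1,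
      ‖(γ s • (1 : Matrix n n ℂ) - (X + Y))⁻¹ - (γ s • (1 : Matrix n n ℂ) - X)⁻¹‖ ≤ C := by
    intro s hs
    have : γ s • (1 : Matrix n n ℂ) - (X + Y) = (γ s • (1 : Matrix n n ℂ) - X) - Y := by abel
    rw [this]
    exact aux_resolvent_bound _ Y β (hXres s hs) (hβ s hs) hβY
  -- combine integrals
  rw [← smul_sub, ← intervalIntegral.integral_sub hint2 hint1, norm_smul]
  have hnormc : ‖(2 * Real.pi * Complex.I)⁻¹‖ = (2 * Real.pi)⁻¹ := by
    simp [norm_inv, Real.pi_nonneg, abs_of_nonneg, norm_mul]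
  rw [hnormc]
  have hIb : ‖∫ s in (0:ℝ)..1,
      ((h (γ s) * dγ s) • (γ s • (1 : Matrix n n ℂ) - (X + Y))⁻¹
        - (h (γ s) * dγ s) • (γ s • (1 : Matrix n n ℂ) - X)⁻¹)‖
      ≤ ∫ s in (0:ℝ)..1, ‖h (γ s)‖ * ‖dγ s‖ * C := by
    refine intervalIntegral.norm_integral_le_of_norm_le zero_le_one ?_ (hint0.mul_const C)
    filter_upwards with s hs
    have hs' : s ∈ Set.Icc (0:ℝ) 1 := by
      exact Set.Ioc_subset_Icc_self hs
    rw [← smul_sub, norm_smul]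
    have : ‖h (γ s) * dγ s‖ = ‖h (γ s)‖ * ‖dγ s‖ := by
      simp [norm_mul]
    rw [this]
    exact mul_le_mul_of_nonneg_left (hpt s hs') (by positivity)
  have hIC : (∫ s in (0:ℝ)..1, ‖h (γ s)‖ * ‖dγ s‖ * C)
      = (∫ s in (0:ℝ)..1, ‖h (γ s)‖ * ‖dγ s‖) * C := by
    rw [← intervalIntegral.integral_mul_const]
  calc (2 * Real.pi)⁻¹ * ‖∫ s in (0:ℝ)..1,
        ((h (γ s) * dγ s) • (γ s • (1 : Matrix n n ℂ) - (X + Y))⁻¹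
          - (h (γ s) * dγ s) • (γ s • (1 : Matrix n n ℂ) - X)⁻¹)‖
      ≤ (2 * Real.pi)⁻¹ * ((∫ s in (0:ℝ)..1, ‖h (γ s)‖ * ‖dγ s‖) * C) := by
        rw [← hIC]; gcongr <;> positivity
    _ = ((2 * Real.pi)⁻¹ * (∫ s in (0:ℝ)..1, ‖h (γ s)‖ * ‖dγ s‖)) * C := by ring
    _ ≤ M * C := by gcongr
    _ = M * (β ^ 2 * ‖Y‖) / (1 - β * ‖Y‖) := by rw [hC]; ring
end

section
/- Two-level weak-measurement Zeno model: let 𝓔 = (1−p)·id + p·𝓟 with 𝓟(ρ) = (ρ + XρX)/2 on 2×2 matrices (X the Pauli x matrix), 0 < p ≤ 1, and 𝓗 = [H, ·] with H = (Ω/2)Z (Z the Pauli z matrix). Then (𝓔 e^{−i(t/n)𝓗})^n → 𝓟 as n → ∞ (in any operator norm on the space of superoperators). -/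
attribute [local instance] Matrix.frobeniusNormedAddCommGroup Matrix.frobeniusNormedRing
  Matrix.frobeniusNormedAlgebra

open Matrix

open Filter in
private lemma tendsto_clm_of_forall {E : Type*} [NormedAddCommGroup E] [NormedSpace ℂ E]
    [FiniteDimensional ℂ E] (F : ℕ → E →L[ℂ] E) (G : E →L[ℂ] E)
    (h : ∀ x : E, Tendsto (fun n => F n x) atTop (nhds (G x))) :
    Tendsto F atTop (nhds G) := by
  classical
  set b := Module.Basis.ofVectorSpace ℂ E with hb
  let Φ : (E →L[ℂ] E) →ₗ[ℂ] (Module.Basis.ofVectorSpaceIndex ℂ E → E) :=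
    { toFun := fun f i => f (b i)
      map_add' := by intro f g; funext i; simp
      map_smul' := by intro c f; funext i; simp }
  have hΦinj : LinearMap.ker Φ = ⊥ := by
    rw [LinearMap.ker_eq_bot]
    intro f g hfg
    have : (f : E →ₗ[ℂ] E) = (g : E →ₗ[ℂ] E) := b.ext fun i => congrFun hfg i
    exact ContinuousLinearMap.coe_injective this
  obtain ⟨Ψ, hΨ⟩ := Φ.exists_leftInverse_of_injective hΦinj
  have hc : Continuous Ψ := Ψ.continuous_of_finiteDimensional
  have h2 : Tendsto (fun n => Ψ (Φ (F n))) atTop (nhds (Ψ (Φ G))) := by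
    apply (hc.tendsto _).comp
    rw [tendsto_pi_nhds]
    exact fun i => h (b i)
  have heq : ∀ f : E →L[ℂ] E, Ψ (Φ f) = f := fun f => by
    have := LinearMap.congr_fun hΨ f
    simpa using this
  simpa [heq] using h2

private lemma zeno_rec_bound (q θ X : ℝ) (hq0 : 0 ≤ q) (hq1 : q < 1)
    (x y : ℕ → ℂ)
    (hx : ∀ k, x (k+1) = (Real.cos θ : ℂ) * x k - Complex.I * (Real.sin θ : ℂ) * y k)
    (hy : ∀ k, y (k+1) = (q:ℂ) * ((Real.cos θ : ℂ) * y k - Complex.I * (Real.sin θ : ℂ) * x k))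
    (hX : ‖x 0‖ + 1 ≤ X)
    (n : ℕ)
    (hsmall : (θ^2/2 * X + |Real.sin θ|^2 * q * X / (1-q)) * n
        + |Real.sin θ| * ‖y 0‖ / (1-q) ≤ 1) :
    ∀ k ≤ n,
      ‖x k - x 0‖ ≤ (θ^2/2 * X + |Real.sin θ|^2 * q * X / (1-q)) * k
          + |Real.sin θ| * ‖y 0‖ * (1 - q^k) / (1-q)
      ∧ ‖y k‖ ≤ q^k * ‖y 0‖ + |Real.sin θ| * q * X / (1-q) := by
  have hq' : 0 < 1 - q := by linarith
  have hs0 : 0 ≤ |Real.sin θ| := abs_nonneg _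
  have hsθ : |Real.sin θ| ≤ |θ| := Real.abs_sin_le_abs
  have hX0 : 0 < X := by have := norm_nonneg (x 0); linarith
  have hY0 : 0 ≤ ‖y 0‖ := norm_nonneg _
  set s := |Real.sin θ| with hs
  set E := θ^2/2 * X + s^2 * q * X / (1-q) with hE
  have hE0 : 0 ≤ E := by
    rw [hE]
    have h1 : 0 ≤ θ^2/2 * X := by positivity
    have h2 : 0 ≤ s^2 * q * X / (1-q) := by positivity
    linarith
  have hcos : |Real.cos θ - 1| ≤ θ^2/2 := by
    rw [abs_le]
    constructor
    · have := Real.one_sub_sq_div_two_le_cos (x := θ); linarith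
    · have := Real.cos_le_one θ; nlinarith [sq_nonneg θ]
  have hgeo0 : ∀ k : ℕ, 0 ≤ 1 - q^k := fun k => by
    have : q^k ≤ 1 := pow_le_one₀ hq0 hq1.le; linarith
  have hgeo1 : ∀ k : ℕ, 1 - q^k ≤ 1 := fun k => by
    have : 0 ≤ q^k := pow_nonneg hq0 k; linarith
  -- norm helpers
  have nrm : ∀ (r : ℝ) (z : ℂ), ‖(r:ℂ) * z‖ = |r| * ‖z‖ := fun r z => by
    rw [norm_mul, Complex.norm_real, Real.norm_eq_abs]
  have nrmI : ∀ (r : ℝ) (z : ℂ), ‖Complex.I * (r:ℂ) * z‖ = |r| * ‖z‖ := fun r z => by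
    rw [mul_assoc, norm_mul, Complex.norm_I, one_mul, nrm]
  clear_value s E
  intro k hk
  induction k with
  | zero =>
    refine ⟨by simp, ?_⟩
    have : 0 ≤ s * q * X / (1-q) := by positivity
    simpa using by linarith
  | succ k ih =>
    have hk' : k ≤ n := Nat.le_of_succ_le hk
    obtain ⟨ihx, ihy⟩ := ih hk'
    have hkn : (k:ℝ) ≤ n := Nat.cast_le.mpr hk'
    have t1 : E * k ≤ E * n := mul_le_mul_of_nonneg_left hkn hE0
    have t2 : s * ‖y 0‖ * (1 - q^k) / (1-q) ≤ s * ‖y 0‖ / (1-q) := by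
      apply div_le_div_of_nonneg_right _ hq'.le
      calc s * ‖y 0‖ * (1 - q^k) ≤ s * ‖y 0‖ * 1 :=
            mul_le_mul_of_nonneg_left (hgeo1 k) (mul_nonneg hs0 hY0)
        _ = s * ‖y 0‖ := mul_one _
    -- bound on ‖x k‖
    have hxk : ‖x k‖ ≤ X := by
      have h1 : ‖x k‖ - ‖x 0‖ ≤ ‖x k - x 0‖ := norm_sub_norm_le _ _
      linarith
    -- y step
    have hyin : ‖(Real.cos θ : ℂ) * y k - Complex.I * (Real.sin θ : ℂ) * x k‖
        ≤ ‖y k‖ + s * ‖x k‖ := by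
      calc ‖(Real.cos θ : ℂ) * y k - Complex.I * (Real.sin θ : ℂ) * x k‖
          ≤ ‖(Real.cos θ : ℂ) * y k‖ + ‖Complex.I * (Real.sin θ : ℂ) * x k‖ := norm_sub_le _ _
        _ = |Real.cos θ| * ‖y k‖ + s * ‖x k‖ := by rw [nrm, nrmI, hs]
        _ ≤ 1 * ‖y k‖ + s * ‖x k‖ := by
            have := mul_le_mul_of_nonneg_right (Real.abs_cos_le_one θ) (norm_nonneg (y k))
            linarith
        _ = ‖y k‖ + s * ‖x k‖ := by rw [one_mul]
    have hyk1 : ‖y (k+1)‖ ≤ q^(k+1) * ‖y 0‖ + s * q * X / (1-q) := by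
      have hsx : s * ‖x k‖ ≤ s * X := mul_le_mul_of_nonneg_left hxk hs0
      have h3 : ‖y (k+1)‖ ≤ q * (‖y k‖ + s * ‖x k‖) := by
        rw [hy k, norm_mul, Complex.norm_real, Real.norm_eq_abs, abs_of_nonneg hq0]
        exact mul_le_mul_of_nonneg_left hyin hq0
      have h4 : q * (‖y k‖ + s * ‖x k‖) ≤ q * ((q^k * ‖y 0‖ + s * q * X / (1-q)) + s * X) :=
        mul_le_mul_of_nonneg_left (by linarith) hq0
      have hid : q * (s * q * X / (1-q)) + q * (s * X) = s * q * X / (1-q) := by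
        field_simp; ring
      have hpow : q^(k+1) = q * q^k := by rw [pow_succ]; ring
      calc ‖y (k+1)‖ ≤ q * ((q^k * ‖y 0‖ + s * q * X / (1-q)) + s * X) := le_trans h3 h4
        _ = q * q^k * ‖y 0‖ + (q * (s * q * X / (1-q)) + q * (s * X)) := by ring
        _ = q^(k+1) * ‖y 0‖ + s * q * X / (1-q) := by rw [hid, hpow]
    -- x step
    have hstep : ‖x (k+1) - x k‖ ≤ E + s * q^k * ‖y 0‖ := by
      have hrw : x (k+1) - x k = ((Real.cos θ - 1 : ℝ) : ℂ) * x k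
          - Complex.I * (Real.sin θ : ℂ) * y k := by
        rw [hx k]; push_cast; ring
      rw [hrw]
      have hsy : s * ‖y k‖ ≤ s * (q^k * ‖y 0‖ + s * q * X / (1-q)) :=
        mul_le_mul_of_nonneg_left ihy hs0
      have hc1 : |Real.cos θ - 1| * ‖x k‖ ≤ θ^2/2 * X := by
        have h0 : |Real.cos θ - 1| * ‖x k‖ ≤ (θ^2/2) * ‖x k‖ :=
          mul_le_mul_of_nonneg_right hcos (norm_nonneg _)
        have h1 : (θ^2/2) * ‖x k‖ ≤ (θ^2/2) * X :=
          mul_le_mul_of_nonneg_left hxk (by positivity)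
        linarith
      calc ‖((Real.cos θ - 1 : ℝ) : ℂ) * x k - Complex.I * (Real.sin θ : ℂ) * y k‖
          ≤ ‖((Real.cos θ - 1 : ℝ) : ℂ) * x k‖ + ‖Complex.I * (Real.sin θ : ℂ) * y k‖ :=
            norm_sub_le _ _
        _ = |Real.cos θ - 1| * ‖x k‖ + s * ‖y k‖ := by rw [nrm, nrmI, hs]
        _ ≤ θ^2/2 * X + s * (q^k * ‖y 0‖ + s * q * X / (1-q)) := by linarith
        _ = E + s * q^k * ‖y 0‖ := by rw [hE]; ring
    have htri : ‖x (k+1) - x 0‖ ≤ ‖x (k+1) - x k‖ + ‖x k - x 0‖ :=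
      norm_sub_le_norm_sub_add_norm_sub _ _ _
    have hid2 : s * q^k * ‖y 0‖ + s * ‖y 0‖ * (1 - q^k)/(1-q)
        = s * ‖y 0‖ * (1 - q^(k+1))/(1-q) := by
      rw [pow_succ]
      field_simp
      ring
    constructor
    · push_cast
      calc ‖x (k+1) - x 0‖ ≤ (E + s * q^k * ‖y 0‖)
            + (E * k + s * ‖y 0‖ * (1 - q^k)/(1-q)) := by linarith
        _ = E * (k+1) + (s * q^k * ‖y 0‖ + s * ‖y 0‖ * (1 - q^k)/(1-q)) := by ring
        _ = E * (k+1) + s * ‖y 0‖ * (1 - q^(k+1))/(1-q) := by rw [hid2]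
    · exact hyk1

open Filter in
private lemma zeno_main (q K : ℝ) (hq0 : 0 ≤ q) (hq1 : q < 1) (hK : 0 ≤ K)
    (θ : ℕ → ℝ) (hθ : ∀ n : ℕ, 1 ≤ n → |θ n| ≤ K / n)
    (x y : ℕ → ℕ → ℂ) (x0 y0 : ℂ)
    (hx0 : ∀ n, x n 0 = x0) (hy0 : ∀ n, y n 0 = y0)
    (hx : ∀ n k, x n (k+1) =
      (Real.cos (θ n) : ℂ) * x n k - Complex.I * (Real.sin (θ n) : ℂ) * y n k)
    (hy : ∀ n k, y n (k+1) =
      (q:ℂ) * ((Real.cos (θ n) : ℂ) * y n k - Complex.I * (Real.sin (θ n) : ℂ) * x n k)) :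
    Tendsto (fun n => x n n) atTop (nhds x0) ∧ Tendsto (fun n => y n n) atTop (nhds 0) := by
  have hq' : 0 < 1 - q := by linarith
  set X : ℝ := ‖x0‖ + 1 with hX
  have hX0 : 0 < X := by rw [hX]; positivity
  set D : ℝ := K^2*(X/2) + K^2*(q*X/(1-q)) + K*(‖y0‖/(1-q)) + K*(q*X/(1-q)) with hD
  have hD0 : 0 ≤ D := by rw [hD]; positivity
  clear_value X D
  have key : ∀ n : ℕ, (1:ℝ) ≤ n → D ≤ n →
      ‖x n n - x0‖ ≤ D/n ∧ ‖y n n‖ ≤ q^n * ‖y0‖ + D/n := by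
    intro n hn1 hnD
    have hn0 : (0:ℝ) < n := by linarith
    have hθn : |θ n| ≤ K / n := hθ n (by exact_mod_cast hn1)
    have hθn' : |θ n| * n ≤ K := by rw [← le_div_iff₀ hn0]; exact hθn
    have hsn : |Real.sin (θ n)| * n ≤ K :=
      le_trans (mul_le_mul_of_nonneg_right Real.abs_sin_le_abs hn0.le) hθn'
    have hsn0 : 0 ≤ |Real.sin (θ n)| * n := mul_nonneg (abs_nonneg _) hn0.le
    have hθ2 : (θ n)^2 * n^2 ≤ K^2 := by
      have h := mul_self_le_mul_self (mul_nonneg (abs_nonneg (θ n)) hn0.le) hθn'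
      nlinarith [sq_abs (θ n)]
    have hs2 : |Real.sin (θ n)|^2 * n^2 ≤ K^2 := by
      have h := mul_self_le_mul_self hsn0 hsn
      nlinarith [h]
    have hbound : ((θ n)^2/2 * X + |Real.sin (θ n)|^2 * q * X / (1-q)) * n
        + |Real.sin (θ n)| * ‖y0‖ / (1-q) ≤ D / n := by
      rw [le_div_iff₀ hn0, hD]
      have f1 : (θ n)^2 * n^2 * (X/2) ≤ K^2 * (X/2) :=
        mul_le_mul_of_nonneg_right hθ2 (by positivity)
      have f2 : |Real.sin (θ n)|^2 * n^2 * (q*X/(1-q)) ≤ K^2 * (q*X/(1-q)) :=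
        mul_le_mul_of_nonneg_right hs2 (by positivity)
      have f3 : |Real.sin (θ n)| * n * (‖y0‖/(1-q)) ≤ K * (‖y0‖/(1-q)) :=
        mul_le_mul_of_nonneg_right hsn (by positivity)
      have f4 : 0 ≤ K * (q*X/(1-q)) := by positivity
      simp only [div_eq_mul_inv] at f1 f2 f3 f4 ⊢
      nlinarith [f1, f2, f3, f4, sq_nonneg ((n:ℝ))]
    have hsmall : ((θ n)^2/2 * X + |Real.sin (θ n)|^2 * q * X / (1-q)) * n
        + |Real.sin (θ n)| * ‖y0‖ / (1-q) ≤ 1 := by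
      exact le_trans hbound ((div_le_one hn0).mpr hnD)
    have hXn : ‖x n 0‖ + 1 ≤ X := by rw [hx0 n, hX]
    have hres := zeno_rec_bound q (θ n) X hq0 hq1 (x n) (y n) (hx n) (hy n) hXn n
      (by rw [hy0 n]; exact hsmall) n le_rfl
    rw [hx0 n, hy0 n] at hres
    obtain ⟨hres1, hres2⟩ := hres
    have hgeo1 : 1 - q^n ≤ 1 := by
      have : 0 ≤ q^n := pow_nonneg hq0 n; linarith
    have hgeo0 : 0 ≤ 1 - q^n := by
      have : q^n ≤ 1 := pow_le_one₀ hq0 hq1.le; linarith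
    have t2 : |Real.sin (θ n)| * ‖y0‖ * (1 - q^n) / (1-q)
        ≤ |Real.sin (θ n)| * ‖y0‖ / (1-q) := by
      apply div_le_div_of_nonneg_right _ hq'.le
      calc |Real.sin (θ n)| * ‖y0‖ * (1 - q^n) ≤ |Real.sin (θ n)| * ‖y0‖ * 1 :=
            mul_le_mul_of_nonneg_left hgeo1 (mul_nonneg (abs_nonneg _) (norm_nonneg _))
        _ = |Real.sin (θ n)| * ‖y0‖ := mul_one _
    constructor
    · linarith
    · have hlast : |Real.sin (θ n)| * q * X / (1-q) ≤ D / n := by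
        rw [le_div_iff₀ hn0, hD]
        have f := mul_le_mul_of_nonneg_right hsn (show 0 ≤ q*X/(1-q) by positivity)
        have g1 : 0 ≤ K^2 * (X/2) := by positivity
        have g2 : 0 ≤ K^2 * (q*X/(1-q)) := by positivity
        have g3 : 0 ≤ K * (‖y0‖/(1-q)) := by positivity
        simp only [div_eq_mul_inv] at f g1 g2 g3 ⊢
        linarith [f, g1, g2, g3]
      linarith
  have hev : ∀ᶠ n : ℕ in atTop, (1:ℝ) ≤ (n:ℝ) ∧ D ≤ (n:ℝ) := by
    filter_upwards [eventually_ge_atTop (max 1 (Nat.ceil D))] with n hn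
    refine ⟨?_, ?_⟩
    · exact_mod_cast le_trans (le_max_left _ _) hn
    · calc D ≤ (Nat.ceil D : ℝ) := Nat.le_ceil D
        _ ≤ (n:ℝ) := by exact_mod_cast le_trans (le_max_right _ _) hn
  constructor
  · rw [← tendsto_sub_nhds_zero_iff]
    apply squeeze_zero_norm' ?_ (tendsto_const_div_atTop_nhds_zero_nat D)
    filter_upwards [hev] with n hn using (key n hn.1 hn.2).1
  · have hg : Tendsto (fun n : ℕ => q^n * ‖y0‖ + D/(n:ℝ)) atTop (nhds 0) := by
      have h1 := (tendsto_pow_atTop_nhds_zero_of_lt_one hq0 hq1).mul_const ‖y0‖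
      have h2 := tendsto_const_div_atTop_nhds_zero_nat D
      simpa using h1.add h2
    apply squeeze_zero_norm' ?_ hg
    filter_upwards [hev] with n hn using (key n hn.1 hn.2).2

private lemma zeno_step (Ω t p : ℝ)
    (𝓟 𝓔 : Matrix (Fin 2) (Fin 2) ℂ →L[ℂ] Matrix (Fin 2) (Fin 2) ℂ)
    (U : ℕ → Matrix (Fin 2) (Fin 2) ℂ →L[ℂ] Matrix (Fin 2) (Fin 2) ℂ)
    (h𝓟 : ∀ ρ, 𝓟 ρ = (2 : ℂ)⁻¹ • (ρ + !![0, 1; 1, 0] * ρ * !![0, 1; 1, 0]))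
    (h𝓔 : ∀ ρ, 𝓔 ρ = (1 - (p : ℂ)) • ρ + (p : ℂ) • 𝓟 ρ)
    (hU : ∀ (n : ℕ) (ρ : Matrix (Fin 2) (Fin 2) ℂ), U n ρ =
      NormedSpace.exp ((-(Complex.I * t / n)) • (((Ω : ℂ) / 2) • !![1, 0; 0, -1])) * ρ *
      NormedSpace.exp ((Complex.I * t / n) • (((Ω : ℂ) / 2) • !![1, 0; 0, -1])))
    (n : ℕ) (σ : Matrix (Fin 2) (Fin 2) ℂ) :
    (𝓔.comp (U n)) σ = !![
      (1 - (p:ℂ)/2) * σ 0 0 + (p:ℂ)/2 * σ 1 1,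
      (1 - (p:ℂ)/2) * ((Real.cos (t*Ω/n) : ℂ) - (Real.sin (t*Ω/n) : ℂ) * Complex.I) * σ 0 1
        + (p:ℂ)/2 * ((Real.cos (t*Ω/n) : ℂ) + (Real.sin (t*Ω/n) : ℂ) * Complex.I) * σ 1 0;
      (p:ℂ)/2 * ((Real.cos (t*Ω/n) : ℂ) - (Real.sin (t*Ω/n) : ℂ) * Complex.I) * σ 0 1
        + (1 - (p:ℂ)/2) * ((Real.cos (t*Ω/n) : ℂ) + (Real.sin (t*Ω/n) : ℂ) * Complex.I) * σ 1 0,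
      (p:ℂ)/2 * σ 0 0 + (1 - (p:ℂ)/2) * σ 1 1] := by
  have hcast : ((t*Ω/(n:ℝ) : ℝ) : ℂ) = (t:ℂ) * Ω / n := by push_cast; ring
  set c : ℂ := -(Complex.I * t / n) * (Ω/2) with hc
  set a : ℂ := NormedSpace.exp c with ha
  set b : ℂ := NormedSpace.exp (-c) with hb
  have e1 : (-(Complex.I * (t:ℂ) / n)) • (((Ω:ℂ)/2) • (!![1, 0; 0, -1] : Matrix (Fin 2) (Fin 2) ℂ))
      = Matrix.diagonal ![c, -c] := by
    rw [smul_smul]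
    ext i j
    fin_cases i <;> fin_cases j <;> simp [Matrix.diagonal_apply, hc]
  have e2 : ((Complex.I * (t:ℂ) / n)) • (((Ω:ℂ)/2) • (!![1, 0; 0, -1] : Matrix (Fin 2) (Fin 2) ℂ))
      = Matrix.diagonal ![-c, c] := by
    rw [smul_smul]
    ext i j
    fin_cases i <;> fin_cases j <;> simp [Matrix.diagonal_apply, hc] <;> ring
  have hab : a * b = 1 := by
    rw [ha, hb, ← NormedSpace.exp_add]
    simp
  have ha2 : a * a = (Real.cos (t*Ω/n) : ℂ) - (Real.sin (t*Ω/n) : ℂ) * Complex.I := by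
    rw [ha, ← NormedSpace.exp_add, ← Complex.exp_eq_exp_ℂ]
    have h2 : c + c = -(((t*Ω/(n:ℝ) : ℝ) : ℂ)) * Complex.I := by rw [hcast, hc]; ring
    rw [h2, Complex.exp_mul_I, Complex.cos_neg, Complex.sin_neg, ← Complex.ofReal_cos,
      ← Complex.ofReal_sin]
    ring
  have hb2 : b * b = (Real.cos (t*Ω/n) : ℂ) + (Real.sin (t*Ω/n) : ℂ) * Complex.I := by
    rw [hb, ← NormedSpace.exp_add, ← Complex.exp_eq_exp_ℂ]
    have h2 : -c + -c = (((t*Ω/(n:ℝ) : ℝ) : ℂ)) * Complex.I := by rw [hcast, hc]; ring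
    rw [h2, Complex.exp_mul_I, ← Complex.ofReal_cos, ← Complex.ofReal_sin]
  have hUn : U n σ = !![σ 0 0 * (a * b), a * a * σ 0 1; b * b * σ 1 0, σ 1 1 * (a * b)] := by
    rw [hU n σ, e1, e2, Matrix.exp_diagonal, Matrix.exp_diagonal]
    ext i j
    fin_cases i <;> fin_cases j <;>
      simp [Matrix.mul_apply, Fin.sum_univ_two, Matrix.diagonal_apply, ha, hb] <;> ring
  rw [ContinuousLinearMap.comp_apply, hUn, h𝓔, h𝓟]
  ext i j
  fin_cases i <;> fin_cases j <;>
    simp [Matrix.mul_apply, Fin.sum_univ_two, Matrix.smul_apply, Matrix.add_apply,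
      -Complex.ofReal_cos, -Complex.ofReal_sin]
  · linear_combination ((1 - (p:ℂ)/2) * σ 0 0 + (p:ℂ)/2 * σ 1 1) * hab
  · linear_combination (1 - (p:ℂ)/2) * σ 0 1 * ha2 + (p:ℂ)/2 * σ 1 0 * hb2
  · linear_combination (p:ℂ)/2 * σ 0 1 * ha2 + (1 - (p:ℂ)/2) * σ 1 0 * hb2
  · linear_combination ((p:ℂ)/2 * σ 0 0 + (1 - (p:ℂ)/2) * σ 1 1) * hab

/-- Two-level weak-measurement Zeno model: with `𝓟(ρ) = (ρ + XρX)/2`,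
`𝓔 = (1−p)·id + p·𝓟` (`0 < p ≤ 1`) and the unitary evolution generated by
`H = (Ω/2)Z`, frequent weak measurements induce the Zeno limit
`(𝓔 e^{−i(t/n)𝓗})^n → 𝓟` as `n → ∞`. -/
theorem two_level_weak_measurement_zeno
    (Ω t p : ℝ) (hp0 : 0 < p) (hp1 : p ≤ 1)
    (𝓟 𝓔 : Matrix (Fin 2) (Fin 2) ℂ →L[ℂ] Matrix (Fin 2) (Fin 2) ℂ)
    (U : ℕ → Matrix (Fin 2) (Fin 2) ℂ →L[ℂ] Matrix (Fin 2) (Fin 2) ℂ)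
    (h𝓟 : ∀ ρ, 𝓟 ρ = (2 : ℂ)⁻¹ • (ρ + !![0, 1; 1, 0] * ρ * !![0, 1; 1, 0]))
    (h𝓔 : ∀ ρ, 𝓔 ρ = (1 - (p : ℂ)) • ρ + (p : ℂ) • 𝓟 ρ)
    (hU : ∀ (n : ℕ) (ρ : Matrix (Fin 2) (Fin 2) ℂ), U n ρ =
      NormedSpace.exp ((-(Complex.I * t / n)) • (((Ω : ℂ) / 2) • !![1, 0; 0, -1])) * ρ *
      NormedSpace.exp ((Complex.I * t / n) • (((Ω : ℂ) / 2) • !![1, 0; 0, -1]))) :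
    Filter.Tendsto (fun n : ℕ => (𝓔.comp (U n)) ^ n) Filter.atTop (nhds 𝓟) := by
  have hq0 : (0:ℝ) ≤ 1 - p := by linarith
  have hq1 : (1:ℝ) - p < 1 := by linarith
  have key := zeno_step Ω t p 𝓟 𝓔 U h𝓟 h𝓔 hU
  apply tendsto_clm_of_forall
  intro ρ
  set σ : ℕ → ℕ → Matrix (Fin 2) (Fin 2) ℂ := fun n k => ((𝓔.comp (U n))^k) ρ with hσ
  have hσ0 : ∀ n, σ n 0 = ρ := fun n => by rw [hσ]; simp
  have hσs : ∀ n k, σ n (k+1) = (𝓔.comp (U n)) (σ n k) := fun n k => by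
    rw [hσ]
    simp only
    rw [pow_succ', ContinuousLinearMap.mul_apply]
  -- off-diagonal sequences
  set x : ℕ → ℕ → ℂ := fun n k => σ n k 0 1 + σ n k 1 0 with hxdef
  set y : ℕ → ℕ → ℂ := fun n k => σ n k 0 1 - σ n k 1 0 with hydef
  have hxrec : ∀ n k, x n (k+1) =
      (Real.cos (t*Ω/n) : ℂ) * x n k - Complex.I * (Real.sin (t*Ω/n) : ℂ) * y n k := by
    intro n k
    rw [hxdef, hydef]
    simp only
    rw [hσs n k, key n (σ n k)]
    simp [-Complex.ofReal_cos, -Complex.ofReal_sin]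
    ring
  have hyrec : ∀ n k, y n (k+1) =
      ((1 - p : ℝ) : ℂ) * ((Real.cos (t*Ω/n) : ℂ) * y n k
        - Complex.I * (Real.sin (t*Ω/n) : ℂ) * x n k) := by
    intro n k
    rw [hxdef, hydef]
    simp only
    rw [hσs n k, key n (σ n k)]
    push_cast
    simp [-Complex.ofReal_cos, -Complex.ofReal_sin]
    ring
  -- diagonal closed form
  set m : ℂ := (ρ 0 0 + ρ 1 1)/2 with hm
  set dd : ℂ := (ρ 0 0 - ρ 1 1)/2 with hdd
  have hdiag : ∀ n k, σ n k 0 0 = m + (1-(p:ℂ))^k * dd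
      ∧ σ n k 1 1 = m - (1-(p:ℂ))^k * dd := by
    intro n k
    induction k with
    | zero =>
      rw [hσ0 n]
      constructor
      · rw [pow_zero, hm, hdd]; ring
      · rw [pow_zero, hm, hdd]; ring
    | succ k ih =>
      rw [hσs n k, key n (σ n k)]
      constructor
      · simp only [Matrix.cons_val', Matrix.cons_val_zero, Matrix.empty_val',
          Matrix.cons_val_fin_one, Matrix.of_apply]
        rw [ih.1, ih.2, pow_succ]
        ring
      · simp only [Matrix.cons_val', Matrix.cons_val_one, Matrix.head_cons, Matrix.empty_val',
          Matrix.cons_val_fin_one, Matrix.head_fin_const, Matrix.of_apply]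
        rw [ih.1, ih.2, pow_succ]
        ring
  -- apply the analytic lemma
  have hθbd : ∀ n : ℕ, 1 ≤ n → |t*Ω/(n:ℝ)| ≤ |t*Ω| / n := by
    intro n _
    exact le_of_eq (by rw [abs_div, Nat.abs_cast])
  have hmain := zeno_main (1-p) |t*Ω| hq0 hq1 (abs_nonneg _) (fun n => t*Ω/(n:ℝ)) hθbd
    x y (ρ 0 1 + ρ 1 0) (ρ 0 1 - ρ 1 0)
    (fun n => by rw [hxdef]; simp only; rw [hσ0 n])
    (fun n => by rw [hydef]; simp only; rw [hσ0 n])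
    hxrec hyrec
  obtain ⟨hxlim, hylim⟩ := hmain
  -- entrywise limits
  have hqnormlt : ‖(1 - (p:ℂ))‖ < 1 := by
    have h1 : (1 - (p:ℂ)) = ((1-p : ℝ) : ℂ) := by push_cast; ring
    rw [h1, Complex.norm_real, Real.norm_eq_abs, abs_of_nonneg hq0]
    linarith
  have hqpow := tendsto_pow_atTop_nhds_zero_of_norm_lt_one hqnormlt
  have h00 : Filter.Tendsto (fun n => σ n n 0 0) Filter.atTop (nhds m) := by
    have he : (fun n => σ n n 0 0) = fun n => m + (1-(p:ℂ))^n * dd :=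
      funext fun n => (hdiag n n).1
    rw [he]
    simpa using Filter.Tendsto.add (tendsto_const_nhds (x := m)) (hqpow.mul_const dd)
  have h11 : Filter.Tendsto (fun n => σ n n 1 1) Filter.atTop (nhds m) := by
    have he : (fun n => σ n n 1 1) = fun n => m - (1-(p:ℂ))^n * dd :=
      funext fun n => (hdiag n n).2
    rw [he]
    simpa using Filter.Tendsto.sub (tendsto_const_nhds (x := m)) (hqpow.mul_const dd)
  have h01 : Filter.Tendsto (fun n => σ n n 0 1) Filter.atTop
      (nhds ((ρ 0 1 + ρ 1 0)/2)) := by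
    have he : (fun n => σ n n 0 1) = fun n => (x n n + y n n)/2 := by
      funext n
      rw [hxdef, hydef]
      simp only
      ring
    rw [he]
    have := (hxlim.add hylim).div_const (2:ℂ)
    simpa using this
  have h10 : Filter.Tendsto (fun n => σ n n 1 0) Filter.atTop
      (nhds ((ρ 0 1 + ρ 1 0)/2)) := by
    have he : (fun n => σ n n 1 0) = fun n => (x n n - y n n)/2 := by
      funext n
      rw [hxdef, hydef]
      simp only
      ring
    rw [he]
    have := (hxlim.sub hylim).div_const (2:ℂ)
    simpa using this
  -- assemble
  have hdecomp : ∀ A : Matrix (Fin 2) (Fin 2) ℂ,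
      A = A 0 0 • (!![1,0;0,0] : Matrix (Fin 2) (Fin 2) ℂ) + A 0 1 • !![0,1;0,0]
        + A 1 0 • !![0,0;1,0] + A 1 1 • !![0,0;0,1] := by
    intro A
    ext i j
    fin_cases i <;> fin_cases j <;>
      simp [Matrix.add_apply, Matrix.smul_apply]
  have hfun : (fun n : ℕ => ((𝓔.comp (U n))^n) ρ)
      = fun n => σ n n 0 0 • (!![1,0;0,0] : Matrix (Fin 2) (Fin 2) ℂ) + σ n n 0 1 • !![0,1;0,0]
        + σ n n 1 0 • !![0,0;1,0] + σ n n 1 1 • !![0,0;0,1] :=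
    funext fun n => hdecomp (σ n n)
  have hlim := ((((h00.smul_const (!![1,0;0,0] : Matrix (Fin 2) (Fin 2) ℂ)).add
    (h01.smul_const !![0,1;0,0])).add
    (h10.smul_const !![0,0;1,0])).add
    (h11.smul_const !![0,0;0,1]))
  have hPρ : m • (!![1,0;0,0] : Matrix (Fin 2) (Fin 2) ℂ) + ((ρ 0 1 + ρ 1 0)/2) • !![0,1;0,0]
      + ((ρ 0 1 + ρ 1 0)/2) • !![0,0;1,0] + m • !![0,0;0,1] = 𝓟 ρ := by
    rw [h𝓟, hm]
    ext i j
    fin_cases i <;> fin_cases j <;>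
      simp [Matrix.mul_apply, Fin.sum_univ_two, Matrix.smul_apply, Matrix.add_apply,
        Matrix.vecMul, dotProduct] <;>
      ring
  show Filter.Tendsto (fun n : ℕ => ((𝓔.comp (U n))^n) ρ) Filter.atTop (nhds (𝓟 ρ))
  rw [hfun, ← hPρ]
  exact hlim
end
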